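/- Let R be an associative ring with identity in which 2 ≠ 0, and let n ≥ 3 be an integer. Let D be the subgroup of E_n(R) generated by the matrices A_{12}, A_{23}, …, A_{n−1,n}. Suppose G is a normal subgroup of E_n(R) containing some element A ∈ D with A ≠ I_n and A ≠ −I_n. Then E_n(R,2R) is contained in G. -/

import Mathlib

open Matrix

namespace Paper

/-! ### Generalities -/

lemma one_add_mul_aux {M : Type*} [Ring M] {x y : M} (h1 : x + y = 0) (h2 : x * y = 0) :
    (1 + x) * (1 + y) = 1 := by
  have h : (1 + x) * (1 + y) = 1 + (x + y) + x * y := by noncomm_ring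
  rw [h, h1, h2, add_zero, add_zero]

/-- The group of self-homeomorphisms of a topological space, under composition. -/
instance homeomorphGroup (X : Type*) [TopologicalSpace X] : Group (X ≃ₜ X) where
  mul a b := b.trans a
  one := Homeomorph.refl X
  inv := Homeomorph.symm
  mul_assoc a b c := rfl
  one_mul a := Homeomorph.ext fun x => rfl
  mul_one a := Homeomorph.ext fun x => rfl
  inv_mul_cancel a := Homeomorph.ext fun x => a.symm_apply_apply x

section Elementary

variable (R : Type*) [Ring R]

lemma stdBasis_cancel (n : ℕ) (i j : Fin n) (a : R) :
    Matrix.single i j a + Matrix.single i j (-a) = 0 := by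
  rw [← Matrix.single_add, add_neg_cancel, Matrix.single_zero]

/-- The elementary matrix `e_{ij}(r) = 1 + r·E_{ij}` as an invertible matrix,
i.e. an element of `GL_n(R)`. -/
def elemGL (n : ℕ) (i j : Fin n) (hij : i ≠ j) (r : R) : (Matrix (Fin n) (Fin n) R)ˣ where
  val := 1 + Matrix.single i j r
  inv := 1 + Matrix.single i j (-r)
  val_inv := one_add_mul_aux (stdBasis_cancel R n i j r)
    (Matrix.single_mul_single_of_ne (c := r) i j i (Ne.symm hij) (-r))
  inv_val := one_add_mul_aux
    (by have := stdBasis_cancel R n i j (-r); rwa [neg_neg] at this)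
    (Matrix.single_mul_single_of_ne (c := -r) i j i (Ne.symm hij) r)

/-- The elementary group `E_n(R)`: the subgroup of `GL_n(R)` generated by all
elementary matrices. -/
def ElementaryGroup (n : ℕ) : Subgroup (Matrix (Fin n) (Fin n) R)ˣ :=
  Subgroup.closure { A | ∃ (i j : Fin n) (hij : i ≠ j) (r : R), A = elemGL R n i j hij r }

lemma elemGL_mem (n : ℕ) (i j : Fin n) (hij : i ≠ j) (r : R) :
    elemGL R n i j hij r ∈ ElementaryGroup R n :=
  Subgroup.subset_closure ⟨i, j, hij, r, rfl⟩

/-- The diagonal matrix with `-1` at places `i`, `j` and `1` elsewhere. -/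
def negPairDiag (n : ℕ) (i j : Fin n) : Matrix (Fin n) (Fin n) R :=
  Matrix.diagonal fun k => if k = i ∨ k = j then -1 else 1

lemma negPairDiag_mul_self (n : ℕ) (i j : Fin n) :
    negPairDiag R n i j * negPairDiag R n i j = 1 := by
  rw [negPairDiag, Matrix.diagonal_mul_diagonal]
  have h : (fun k => (if k = i ∨ k = j then (-1 : R) else 1) *
      (if k = i ∨ k = j then (-1 : R) else 1)) = fun _ => (1 : R) := by
    funext k
    by_cases h : k = i ∨ k = j <;> simp [h]
  rw [h, Matrix.diagonal_one]

/-- The matrix `negPairDiag` as an invertible matrix. -/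
def negPairGL (n : ℕ) (i j : Fin n) : (Matrix (Fin n) (Fin n) R)ˣ :=
  ⟨negPairDiag R n i j, negPairDiag R n i j,
    negPairDiag_mul_self R n i j, negPairDiag_mul_self R n i j⟩

/-- The matrix `A_{i,i+1}` (0-indexed: diagonal entries `i` and `i+1` equal `-1`). -/
def APair (n : ℕ) (i : Fin (n - 1)) : (Matrix (Fin n) (Fin n) R)ˣ :=
  negPairGL R n ⟨(i : ℕ), by have := i.isLt; omega⟩ ⟨(i : ℕ) + 1, by have := i.isLt; omega⟩

/-- `E_n(R, 2R)`: the smallest normal subgroup of `E_n(R)` containing all elementary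
matrices `e_{ij}(s)` with `s ∈ 2R`. -/
def RelElementaryGroup (n : ℕ) : Subgroup ↥(ElementaryGroup R n) :=
  Subgroup.normalClosure
    { x : ↥(ElementaryGroup R n) | ∃ (i j : Fin n) (hij : i ≠ j) (r : R),
        x.val = elemGL R n i j hij (2 * r) }

end Elementary

section Symplectic

variable (S : Type*) [CommRing S]

/-- The index involution `σ` on `{0, …, 2n-1}`: `σk = k + n` if `k < n`, else `σk = k - n`. -/
def sigIdx (n : ℕ) (k : Fin (2 * n)) : Fin (2 * n) :=
  if h : (k : ℕ) < n then ⟨(k : ℕ) + n, by omega⟩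
  else ⟨(k : ℕ) - n, by have := k.isLt; omega⟩

lemma sigIdx_ne (n : ℕ) (k : Fin (2 * n)) : sigIdx n k ≠ k := by
  have hk := k.isLt
  unfold sigIdx
  split_ifs with h <;>
    · intro hEq
      have h2 := congrArg Fin.val hEq
      simp only [Fin.val_mk] at h2 -- may need adjusting
      omega

lemma sigIdx_inj (n : ℕ) {k l : Fin (2 * n)} (h : k ≠ l) : sigIdx n k ≠ sigIdx n l := by
  have hk := k.isLt
  have hl := l.isLt
  have hkl : (k : ℕ) ≠ (l : ℕ) := fun hc => h (Fin.ext hc)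
  unfold sigIdx
  split_ifs with h1 h2 h2 <;>
    · intro hEq
      have h3 := congrArg Fin.val hEq
      simp only [Fin.val_mk] at h3
      omega

/-- The symplectic elementary matrix `ρ_{ij}(a)`, as a matrix.  When `j = σi` it is
`1 + a E_{i,σi}`; otherwise it is `1 + a E_{ij} - δ a E_{σj,σi}` where `δ = 1` if `i, j`
are on the same side of `n` and `δ = -1` otherwise. -/
def symElemMat (n : ℕ) (i j : Fin (2 * n)) (a : S) : Matrix (Fin (2 * n)) (Fin (2 * n)) S :=
  if j = sigIdx n i then 1 + Matrix.single i j a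
  else 1 + Matrix.single i j a -
    Matrix.single (sigIdx n j) (sigIdx n i)
      ((if ((i : ℕ) < n ↔ (j : ℕ) < n) then 1 else -1) * a)

lemma symElemMat_mul_neg (n : ℕ) (i j : Fin (2 * n)) (hij : i ≠ j) (a : S) :
    symElemMat S n i j a * symElemMat S n i j (-a) = 1 := by
  unfold symElemMat
  set d : S := if ((i : ℕ) < n ↔ (j : ℕ) < n) then 1 else -1 with hd
  split_ifs with h
  · exact one_add_mul_aux (stdBasis_cancel S _ i j a)
      (Matrix.single_mul_single_of_ne (c := a) i j i (Ne.symm hij) (-a))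
  · rw [add_sub_assoc, add_sub_assoc]
    apply one_add_mul_aux
    · have c1 := stdBasis_cancel S _ i j a
      have c2 := stdBasis_cancel S _ (sigIdx n j) (sigIdx n i) (d * a)
      rw [mul_neg]
      calc Matrix.single i j a - Matrix.single (sigIdx n j) (sigIdx n i) (d * a) +
            (Matrix.single i j (-a) - Matrix.single (sigIdx n j) (sigIdx n i) (-(d * a)))
          = (Matrix.single i j a + Matrix.single i j (-a)) -
            (Matrix.single (sigIdx n j) (sigIdx n i) (d * a) +
              Matrix.single (sigIdx n j) (sigIdx n i) (-(d * a))) := by abel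
        _ = 0 := by rw [c1, c2, sub_zero]
    · simp only [sub_mul, mul_sub]
      rw [Matrix.single_mul_single_of_ne (c := a) i j i (Ne.symm hij) (-a),
        Matrix.single_mul_single_of_ne (c := a) i j (sigIdx n j) (Ne.symm (sigIdx_ne n j)) (d * -a),
        Matrix.single_mul_single_of_ne (c := d * a) (sigIdx n j) (sigIdx n i) i (sigIdx_ne n i) (-a),
        Matrix.single_mul_single_of_ne (c := d * a) (sigIdx n j) (sigIdx n i) (sigIdx n j)
          (sigIdx_inj n hij) (d * -a)]
      simp

/-- The symplectic elementary matrix `ρ_{ij}(a)` as an invertible matrix. -/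
def symElemGL (n : ℕ) (i j : Fin (2 * n)) (hij : i ≠ j) (a : S) :
    (Matrix (Fin (2 * n)) (Fin (2 * n)) S)ˣ where
  val := symElemMat S n i j a
  inv := symElemMat S n i j (-a)
  val_inv := symElemMat_mul_neg S n i j hij a
  inv_val := by have := symElemMat_mul_neg S n i j hij (-a); rwa [neg_neg] at this

/-- The elementary symplectic group `Ep_{2n}(S)`, generated by all symplectic
elementary matrices. -/
def EpGroup (n : ℕ) : Subgroup (Matrix (Fin (2 * n)) (Fin (2 * n)) S)ˣ :=
  Subgroup.closure
    { A | ∃ (i j : Fin (2 * n)) (hij : i ≠ j) (a : S), A = symElemGL S n i j hij a }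

/-- The matrix `J = [[0, I_n], [-I_n, 0]]` of the standard symplectic form. -/
def Jmat (n : ℕ) : Matrix (Fin (2 * n)) (Fin (2 * n)) S :=
  Matrix.of fun i j =>
    if (i : ℕ) + n = (j : ℕ) then 1 else if (j : ℕ) + n = (i : ℕ) then -1 else 0

/-- The symplectic group `Sp_{2n}(S)`: invertible `2n × 2n` matrices `M` with
`Mᵀ * J * M = J`. -/
def SpGroup (n : ℕ) : Subgroup (Matrix (Fin (2 * n)) (Fin (2 * n)) S)ˣ where
  carrier := { M | (↑M : Matrix (Fin (2 * n)) (Fin (2 * n)) S)ᵀ * Jmat S n * ↑M = Jmat S n }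
  one_mem' := by simp
  mul_mem' := by
    intro a b ha hb
    show (↑(a * b) : Matrix (Fin (2 * n)) (Fin (2 * n)) S)ᵀ * Jmat S n *
      (↑(a * b) : Matrix (Fin (2 * n)) (Fin (2 * n)) S) = Jmat S n
    rw [Units.val_mul, Matrix.transpose_mul]
    calc (↑b : Matrix (Fin (2*n)) (Fin (2*n)) S)ᵀ * (↑a : Matrix (Fin (2*n)) (Fin (2*n)) S)ᵀ *
          Jmat S n * (↑a * ↑b)
        = (↑b : Matrix (Fin (2*n)) (Fin (2*n)) S)ᵀ *
            ((↑a : Matrix (Fin (2*n)) (Fin (2*n)) S)ᵀ * Jmat S n * ↑a) * ↑b := by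
          noncomm_ring
      _ = (↑b : Matrix (Fin (2*n)) (Fin (2*n)) S)ᵀ * Jmat S n * ↑b := by rw [ha]
      _ = Jmat S n := hb
  inv_mem' := by
    intro a ha
    have ha' : (↑a : Matrix (Fin (2 * n)) (Fin (2 * n)) S)ᵀ * Jmat S n *
        (↑a : Matrix (Fin (2 * n)) (Fin (2 * n)) S) = Jmat S n := ha
    show ((a⁻¹ : (Matrix (Fin (2 * n)) (Fin (2 * n)) S)ˣ) :
        Matrix (Fin (2 * n)) (Fin (2 * n)) S)ᵀ * Jmat S n *
        ((a⁻¹ : (Matrix (Fin (2 * n)) (Fin (2 * n)) S)ˣ) :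
        Matrix (Fin (2 * n)) (Fin (2 * n)) S) = Jmat S n
    set A : Matrix (Fin (2 * n)) (Fin (2 * n)) S := ↑a with hA
    set B : Matrix (Fin (2 * n)) (Fin (2 * n)) S := ((a⁻¹ :
        (Matrix (Fin (2 * n)) (Fin (2 * n)) S)ˣ) : Matrix (Fin (2 * n)) (Fin (2 * n)) S) with hB
    have h1 : A * B = 1 := a.mul_inv
    calc Bᵀ * Jmat S n * B
        = Bᵀ * (Aᵀ * Jmat S n * A) * B := by rw [ha']
      _ = (A * B)ᵀ * Jmat S n * (A * B) := by rw [Matrix.transpose_mul]; noncomm_ring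
      _ = Jmat S n := by rw [h1]; simp

end Symplectic

section Extra

variable (R : Type*) [Ring R]

/-- Index of the `(2i-1)`-th row (1-indexed), i.e. `2i` 0-indexed. -/
def bIdx0 (k : ℕ) (i : Fin k) : Fin (2 * k) := ⟨2 * (i : ℕ), by have := i.isLt; omega⟩

def bIdx1 (k : ℕ) (i : Fin k) : Fin (2 * k) := ⟨2 * (i : ℕ) + 1, by have := i.isLt; omega⟩

lemma bIdx_ne (k : ℕ) (i : Fin k) : bIdx0 k i ≠ bIdx1 k i := by
  simp only [bIdx0, bIdx1, ne_eq, Fin.mk.injEq]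
  omega

/-- The matrix `B_i = e_{2i-1,2i}(1) e_{2i,2i-1}(-1) e_{2i-1,2i}(1) e_{2i,2i-1}(-1)`
(1-indexed) in `E_{2k}(R)`. -/
def Bmat (k : ℕ) (i : Fin k) : (Matrix (Fin (2 * k)) (Fin (2 * k)) R)ˣ :=
  elemGL R (2 * k) (bIdx0 k i) (bIdx1 k i) (bIdx_ne k i) 1 *
  elemGL R (2 * k) (bIdx1 k i) (bIdx0 k i) (bIdx_ne k i).symm (-1) *
  elemGL R (2 * k) (bIdx0 k i) (bIdx1 k i) (bIdx_ne k i) 1 *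
  elemGL R (2 * k) (bIdx1 k i) (bIdx0 k i) (bIdx_ne k i).symm (-1)

end Extra

section SymplecticExtra

variable (S : Type*) [CommRing S]

def cIdx0 (n : ℕ) (i : Fin n) : Fin (2 * n) := ⟨(i : ℕ), by have := i.isLt; omega⟩

def cIdx1 (n : ℕ) (i : Fin n) : Fin (2 * n) := ⟨n + (i : ℕ), by have := i.isLt; omega⟩

lemma cIdx_ne (n : ℕ) (i : Fin n) : cIdx0 n i ≠ cIdx1 n i := by
  have := i.pos
  simp only [cIdx0, cIdx1, ne_eq, Fin.mk.injEq]
  omega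

/-- The matrix `C_i = ρ_{i,n+i}(1) ρ_{n+i,i}(-1) ρ_{i,n+i}(1) ρ_{n+i,i}(-1)` in
`Sp_{2n}(S)`. -/
def Cmat (n : ℕ) (i : Fin n) : (Matrix (Fin (2 * n)) (Fin (2 * n)) S)ˣ :=
  symElemGL S n (cIdx0 n i) (cIdx1 n i) (cIdx_ne n i) 1 *
  symElemGL S n (cIdx1 n i) (cIdx0 n i) (cIdx_ne n i).symm (-1) *
  symElemGL S n (cIdx0 n i) (cIdx1 n i) (cIdx_ne n i) 1 *
  symElemGL S n (cIdx1 n i) (cIdx0 n i) (cIdx_ne n i).symm (-1)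

/-- The equivalence `Fin n ⊕ Fin n ≃ Fin (2 * n)`. -/
def finDouble (n : ℕ) : Fin n ⊕ Fin n ≃ Fin (2 * n) :=
  finSumFinEquiv.trans (finCongr (two_mul n).symm)

/-- The block-diagonal matrix `diag(A, B)` as a `2n × 2n` matrix. -/
def blockDiag2 (n : ℕ) (A B : Matrix (Fin n) (Fin n) S) :
    Matrix (Fin (2 * n)) (Fin (2 * n)) S :=
  Matrix.reindex (finDouble n) (finDouble n) (Matrix.fromBlocks A 0 0 B)

lemma blockDiag2_mul (n : ℕ) (A B A' B' : Matrix (Fin n) (Fin n) S) :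
    blockDiag2 S n A B * blockDiag2 S n A' B' = blockDiag2 S n (A * A') (B * B') := by
  unfold blockDiag2
  rw [Matrix.reindex_apply, Matrix.reindex_apply, Matrix.reindex_apply,
    Matrix.submatrix_mul_equiv, Matrix.fromBlocks_multiply]
  simp

lemma blockDiag2_one (n : ℕ) : blockDiag2 S n 1 1 = 1 := by
  unfold blockDiag2
  rw [Matrix.reindex_apply, Matrix.fromBlocks_one, Matrix.submatrix_one_equiv]

/-- The hyperbolic embedding `A ↦ diag(A, (Aᵀ)⁻¹) = diag(A, (A⁻¹)ᵀ)` from `GL_n(S)`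
to `GL_{2n}(S)`. -/
def hypGL (n : ℕ) (A : (Matrix (Fin n) (Fin n) S)ˣ) :
    (Matrix (Fin (2 * n)) (Fin (2 * n)) S)ˣ where
  val := blockDiag2 S n ↑A ((↑(A⁻¹) : Matrix (Fin n) (Fin n) S)ᵀ)
  inv := blockDiag2 S n ↑(A⁻¹) ((↑A : Matrix (Fin n) (Fin n) S)ᵀ)
  val_inv := by
    rw [blockDiag2_mul, ← Matrix.transpose_mul, A.mul_inv, Matrix.transpose_one,
      blockDiag2_one]
  inv_val := by
    rw [blockDiag2_mul, ← Matrix.transpose_mul, A.inv_mul, Matrix.transpose_one,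
      blockDiag2_one]

end SymplecticExtra


/-! ### Auxiliary lemmas -/
section Aux1
variable (R : Type*) [Ring R]

lemma stdBasisMatrix_neg' (n : ℕ) (i j : Fin n) (a : R) :
    Matrix.single i j (-a) = -Matrix.single i j a := by
  ext p q; simp [Matrix.single]; split <;> simp

lemma prod_expand (n : ℕ) (i j : Fin n) (hij : i ≠ j) (a b : R) :
    (1 + Matrix.single i j a) * (1 + Matrix.single i j b) =
      1 + Matrix.single i j (a + b) := by
  have h0 : Matrix.single i j a * Matrix.single i j b = 0 :=
    Matrix.single_mul_single_of_ne (c := a) i j i hij.symm b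
  rw [mul_add, add_mul, add_mul, mul_one, one_mul, mul_one, h0, Matrix.single_add]
  abel

lemma comm_expand (n : ℕ) (i j k : Fin n) (hij : i ≠ j) (hjk : j ≠ k) (hik : i ≠ k)
    (a b : R) :
    (1 + Matrix.single i j a) * (1 + Matrix.single j k b) *
      ((1 + Matrix.single i j (-a)) * (1 + Matrix.single j k (-b))) =
      1 + Matrix.single i k (a * b) := by
  set E := Matrix.single i j a with hE
  set F := Matrix.single j k b with hF
  set G := Matrix.single i k (a * b) with hG
  have hEF : E * F = G := Matrix.single_mul_single_same (c := a) i j k b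
  have hFE : F * E = 0 := Matrix.single_mul_single_of_ne (c := b) j k i hik.symm a
  have hEE : E * E = 0 := Matrix.single_mul_single_of_ne (c := a) i j i hij.symm a
  have hFF : F * F = 0 := Matrix.single_mul_single_of_ne (c := b) j k j hjk.symm b
  have hEG : E * G = 0 := Matrix.single_mul_single_of_ne (c := a) i j i hij.symm (a*b)
  have hGE : G * E = 0 := Matrix.single_mul_single_of_ne (c := (a*b)) i k i hik.symm a
  have hFG : F * G = 0 := Matrix.single_mul_single_of_ne (c := b) j k i hik.symm (a*b)
  have hGF : G * F = 0 := Matrix.single_mul_single_of_ne (c := (a*b)) i k j hjk.symm b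
  have hGG : G * G = 0 := Matrix.single_mul_single_of_ne (c := (a*b)) i k i hik.symm (a*b)
  rw [stdBasisMatrix_neg' R n i j a, stdBasisMatrix_neg' R n j k b, ← hE, ← hF]
  have h1 : (1 + E) * (1 + F) = 1 + (E + F + G) := by
    rw [mul_add, add_mul, add_mul, mul_one, one_mul, mul_one, hEF]; abel
  have h2 : (1 + -E) * (1 + -F) = 1 - (E + F - G) := by
    have : (-E) * (-F) = G := by rw [neg_mul_neg, hEF]
    rw [mul_add, add_mul, add_mul, mul_one, one_mul, mul_one, this]; abel
  rw [h1, h2]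
  have h4 : (E + F + G) * (E + F - G) = G := by
    rw [add_mul, add_mul, mul_sub, mul_sub, mul_sub, mul_add, mul_add, mul_add,
      hEE, hEF, hEG, hFE, hFF, hFG, hGE, hGF, hGG]
    abel
  rw [mul_sub, mul_one, add_mul, one_mul, h4]
  abel

lemma diag_conj_mat (n : ℕ) (ε : Fin n → R) (i j : Fin n) (hij : i ≠ j) (r : R) :
    Matrix.diagonal ε * (1 + Matrix.single i j r) * Matrix.diagonal ε =
      Matrix.diagonal (fun k => ε k * ε k) + Matrix.single i j (ε i * r * ε j) := by
  ext p q
  rw [Matrix.mul_diagonal, Matrix.diagonal_mul, Matrix.add_apply, Matrix.add_apply,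
    Matrix.one_apply, Matrix.diagonal_apply, Matrix.single, Matrix.single]
  simp only [Matrix.of_apply]
  by_cases hpq : p = q
  · subst hpq
    have : ¬ (i = p ∧ j = p) := fun ⟨h1, h2⟩ => hij (h1.trans h2.symm)
    simp [this]
  · simp only [hpq, if_false]
    by_cases hc : i = p ∧ j = q
    · simp [hc.1, hc.2]
    · simp [hc]

/-- The elementary matrix as an element of the elementary group. -/
def eE (n : ℕ) (i j : Fin n) (hij : i ≠ j) (r : R) : ↥(ElementaryGroup R n) :=
  ⟨elemGL R n i j hij r, elemGL_mem R n i j hij r⟩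

lemma eE_inv (n : ℕ) (i j : Fin n) (hij : i ≠ j) (r : R) :
    (eE R n i j hij r)⁻¹ = eE R n i j hij (-r) :=
  Subtype.ext (Units.ext rfl)

lemma eE_mul (n : ℕ) (i j : Fin n) (hij : i ≠ j) (a b : R) :
    eE R n i j hij a * eE R n i j hij b = eE R n i j hij (a + b) :=
  Subtype.ext (Units.ext (prod_expand R n i j hij a b))

lemma eE_comm (n : ℕ) (i j k : Fin n) (hij : i ≠ j) (hjk : j ≠ k) (hik : i ≠ k) (a b : R) :
    eE R n i j hij a * eE R n j k hjk b *
      ((eE R n i j hij a)⁻¹ * (eE R n j k hjk b)⁻¹) = eE R n i k hik (a * b) := by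
  rw [eE_inv, eE_inv]
  exact Subtype.ext (Units.ext (comm_expand R n i j k hij hjk hik a b))

end Aux1

section Aux2
variable {R : Type*} [Ring R] {n : ℕ}

lemma step1 (G : Subgroup ↥(ElementaryGroup R n)) (hG : G.Normal) {p q : Fin n} (hpq : p ≠ q) {s : R} (hs : eE R n p q hpq s ∈ G)
    {k : Fin n} (hpk : p ≠ k) (hqk : q ≠ k) (b : R) :
    eE R n p k hpk (s * b) ∈ G := by
  rw [← eE_comm R n p q k hpq hqk hpk s b]
  have heq : eE R n p q hpq s * eE R n q k hqk b *
      ((eE R n p q hpq s)⁻¹ * (eE R n q k hqk b)⁻¹)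
      = eE R n p q hpq s *
        (eE R n q k hqk b * (eE R n p q hpq s)⁻¹ * (eE R n q k hqk b)⁻¹) := by
    group
  rw [heq]
  exact mul_mem hs (hG.conj_mem _ (inv_mem hs) _)

lemma step2 (G : Subgroup ↥(ElementaryGroup R n)) (hG : G.Normal) {p q : Fin n} (hpq : p ≠ q) {s : R} (hs : eE R n p q hpq s ∈ G)
    {k : Fin n} (hkp : k ≠ p) (hkq : k ≠ q) (b : R) :
    eE R n k q hkq (b * s) ∈ G := by
  rw [← eE_comm R n k p q hkp hpq hkq b s]
  have heq : eE R n k p hkp b * eE R n p q hpq s *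
      ((eE R n k p hkp b)⁻¹ * (eE R n p q hpq s)⁻¹)
      = (eE R n k p hkp b * eE R n p q hpq s * (eE R n k p hkp b)⁻¹) *
        (eE R n p q hpq s)⁻¹ := by
    group
  rw [heq]
  exact mul_mem (hG.conj_mem _ hs _) (inv_mem hs)

end Aux2

lemma exists_third {n : ℕ} (hn : 3 ≤ n) (k i : Fin n) : ∃ m : Fin n, m ≠ k ∧ m ≠ i := by
  by_contra h
  push_neg at h
  have hsub : (Finset.univ : Finset (Fin n)) ⊆ {k, i} := by
    intro m _
    rcases eq_or_ne m k with h1 | h1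
    · simp [h1]
    · simp [h m h1]
  have hcard := Finset.card_le_card hsub
  have : (({k, i} : Finset (Fin n)).card) ≤ 2 := Finset.card_insert_le _ _ |>.trans (by simp)
  simp [Finset.card_univ] at hcard
  omega

/-- If a normal subgroup `G` of `E_n(R)` (`n ≥ 3`, `2 ≠ 0` in `R`)
contains an element of the subgroup generated by `A_{12}, …, A_{n-1,n}` other than
`±I_n`, then `E_n(R, 2R) ≤ G`. -/
theorem statement1 (R : Type*) [Ring R] (h2 : (2 : R) ≠ 0) (n : ℕ) (hn : 3 ≤ n)
    (G : Subgroup ↥(ElementaryGroup R n)) (hG : G.Normal)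
    (A : ↥(ElementaryGroup R n))
    (hAD : A ∈ Subgroup.closure
      { x : ↥(ElementaryGroup R n) | ∃ i : Fin (n - 1), x.val = APair R n i })
    (hA1 : (A.val.val : Matrix (Fin n) (Fin n) R) ≠ 1)
    (hA2 : (A.val.val : Matrix (Fin n) (Fin n) R) ≠ -1)
    (hAG : A ∈ G) :
    RelElementaryGroup R n ≤ G := by
  have hone : (1 : R) ≠ -1 := by
    intro h
    apply h2
    calc (2 : R) = 1 + 1 := by norm_num
      _ = 1 + -1 := by rw [← h]
      _ = 0 := by rw [add_neg_cancel]
  -- Step 1: A is a ±1-diagonal matrix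
  have hdiag : ∃ ε : Fin n → R, (∀ k, ε k = 1 ∨ ε k = -1) ∧
      (A.val.val : Matrix (Fin n) (Fin n) R) = Matrix.diagonal ε := by
    refine Subgroup.closure_induction ?_ ?_ ?_ ?_ hAD
    · rintro x ⟨i, hx⟩
      refine ⟨fun k => if k = ⟨(i:ℕ), by have := i.isLt; omega⟩ ∨
          k = ⟨(i:ℕ)+1, by have := i.isLt; omega⟩ then -1 else 1, fun k => ?_, ?_⟩
      · dsimp only; split <;> simp
      · rw [hx]; rfl
    · exact ⟨fun _ => 1, fun _ => Or.inl rfl, by simp⟩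
    · rintro x y _ _ ⟨ε1, hε1, hx⟩ ⟨ε2, hε2, hy⟩
      refine ⟨fun k => ε1 k * ε2 k, fun k => ?_, ?_⟩
      · rcases hε1 k with h1 | h1 <;> rcases hε2 k with h2 | h2 <;>
          simp [h1, h2]
      · show (x.val.val * y.val.val : Matrix (Fin n) (Fin n) R) = _
        rw [hx, hy, Matrix.diagonal_mul_diagonal]
    · rintro x _ ⟨ε, hε, hx⟩
      refine ⟨ε, hε, ?_⟩
      have hsq : (x.val.val : Matrix (Fin n) (Fin n) R) * x.val.val = 1 := by
        rw [hx, Matrix.diagonal_mul_diagonal]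
        have : (fun k => ε k * ε k) = fun _ => (1 : R) := by
          funext k; rcases hε k with h | h <;> simp [h]
        rw [this, Matrix.diagonal_one]
      have hx2 : x * x = 1 := Subtype.ext (Units.ext hsq)
      have hxi : x⁻¹ = x := inv_eq_of_mul_eq_one_right hx2
      rw [hxi]
      exact hx
  obtain ⟨ε, hε, hA⟩ := hdiag
  -- find i with ε i = -1 and j with ε j = 1
  have hne1 : ∃ i, ε i = -1 := by
    by_contra h
    push_neg at h
    apply hA1
    rw [hA]
    have : ε = fun _ => 1 := funext fun k => (hε k).resolve_right (h k)
    rw [this]; exact Matrix.diagonal_one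
  have hne2 : ∃ j, ε j = 1 := by
    by_contra h
    push_neg at h
    apply hA2
    rw [hA]
    have : ε = fun _ => -1 := funext fun k => (hε k).resolve_left (h k)
    rw [this]
    ext p q
    by_cases hpq : p = q <;> simp [Matrix.diagonal_apply, hpq]
  obtain ⟨i, hi⟩ := hne1
  obtain ⟨j, hj⟩ := hne2
  have hij : i ≠ j := by
    intro h
    rw [h, hj] at hi
    exact hone hi
  -- conjugation: A e_{ij}(r) A⁻¹ = e_{ij}(-r)
  have hAinv : ((A⁻¹).val.val : Matrix (Fin n) (Fin n) R) = Matrix.diagonal ε := by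
    have hsq : (A.val.val : Matrix (Fin n) (Fin n) R) * A.val.val = 1 := by
      rw [hA, Matrix.diagonal_mul_diagonal]
      have : (fun k => ε k * ε k) = fun _ => (1 : R) := by
        funext k; rcases hε k with h | h <;> simp [h]
      rw [this, Matrix.diagonal_one]
    have hA2' : A * A = 1 := Subtype.ext (Units.ext hsq)
    have : A⁻¹ = A := inv_eq_of_mul_eq_one_right hA2'
    rw [this, hA]
  have hconj : ∀ r : R, A * eE R n i j hij r * A⁻¹ = eE R n i j hij (-r) := by
    intro r
    apply Subtype.ext
    apply Units.ext
    show (A.val.val : Matrix (Fin n) (Fin n) R) * (1 + Matrix.single i j r) *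
        (A⁻¹).val.val = 1 + Matrix.single i j (-r)
    rw [hA, hAinv, diag_conj_mat R n ε i j hij r, hi, hj]
    have h1 : (fun k => ε k * ε k) = fun _ => (1 : R) := by
      funext k; rcases hε k with h | h <;> simp [h]
    rw [h1, Matrix.diagonal_one, mul_one, neg_one_mul]
  -- base: e_{ij}(2r) ∈ G
  have hbase : ∀ r : R, eE R n i j hij (2 * r) ∈ G := by
    intro r
    have key : eE R n i j hij (2 * r) =
        A * (eE R n i j hij (-r) * A⁻¹ * (eE R n i j hij (-r))⁻¹) := by
      have h1 : A * eE R n i j hij (-r) * A⁻¹ = eE R n i j hij r := by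
        rw [hconj (-r), neg_neg]
      have h2 : (eE R n i j hij (-r))⁻¹ = eE R n i j hij r := by
        rw [eE_inv, neg_neg]
      calc eE R n i j hij (2 * r) = eE R n i j hij (r + r) := by rw [two_mul]
        _ = eE R n i j hij r * eE R n i j hij r := (eE_mul R n i j hij r r).symm
        _ = (A * eE R n i j hij (-r) * A⁻¹) * eE R n i j hij r := by rw [h1]
        _ = A * (eE R n i j hij (-r) * A⁻¹ * (eE R n i j hij (-r))⁻¹) := by
            rw [h2]; group
    rw [key]
    exact mul_mem hAG (hG.conj_mem _ (inv_mem hAG) _)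
  -- all pairs
  have rowi : ∀ (l : Fin n) (h : i ≠ l) (r : R), eE R n i l h (2 * r) ∈ G := by
    intro l h r
    rcases eq_or_ne l j with hlj | hlj
    · subst hlj; exact hbase r
    · have := step1 G hG hij (hbase r) h (Ne.symm hlj) 1
      rwa [mul_one] at this
  have noti : ∀ (k l : Fin n) (hkl : k ≠ l) (h : l ≠ i) (r : R), eE R n k l hkl (2 * r) ∈ G := by
    intro k l hkl h r
    rcases eq_or_ne k i with hki | hki
    · subst hki; exact rowi l hkl r
    · have := step2 G hG (Ne.symm h) (rowi l (Ne.symm h) r) hki hkl 1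
      rwa [one_mul] at this
  have allp : ∀ (k l : Fin n) (hkl : k ≠ l) (r : R), eE R n k l hkl (2 * r) ∈ G := by
    intro k l hkl r
    rcases eq_or_ne l i with hli | hli
    · obtain ⟨m, hmk, hml⟩ := exists_third hn k l
      have hmi : m ≠ i := fun hc => hml (hc.trans hli.symm)
      have h1 : eE R n k m (Ne.symm hmk) (2 * r) ∈ G :=
        noti k m (Ne.symm hmk) hmi r
      have := step1 G hG (Ne.symm hmk) h1 hkl hml 1
      rwa [mul_one] at this
    · exact noti k l hkl hli r
  -- conclude
  haveI := hG
  apply Subgroup.normalClosure_le_normal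
  rintro x ⟨i', j', hij', r, hx⟩
  have : x = eE R n i' j' hij' (2 * r) := Subtype.ext hx
  rw [this]
  exact allp i' j' hij' r

end Paper
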